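/- Let $\ell$ be a prime, $q$ a prime power with multiplicative order $n$ modulo $\ell$, $2 \leq n < \ell$, $r = \mathrm{ord}_\ell(q^n - 1)$, and let $\zeta$ be a primitive $\ell^r$-th root of unity over $\mathbb{Q}_\ell$. For each integer $j$, the element $\zeta^j + \zeta^{jq} + \cdots + \zeta^{jq^{n-1}}$ lies in the $\mathbb{Z}_\ell$-subalgebra of $\mathbb{Z}_\ell[\zeta]$ generated by $\omega = \zeta + \zeta^q + \cdots + \zeta^{q^{n-1}}$; that is, there exists $h \in \mathbb{Z}_\ell[Y]$ with $\zeta^j + \zeta^{jq} + \cdots + \zeta^{jq^{n-1}} = h(\omega)$. -/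

import Mathlib

open Polynomial Finset

/-- Leading-term helper: `(a*y^j + s*y^(j+1))^k = a^k*y^(j*k) + t*y^(j*k+1)`. -/
lemma pow_lead {A : Type*} [CommRing A] (y a s : A) (j : ℕ) :
    ∀ k : ℕ, ∃ t : A, (a * y ^ j + s * y ^ (j+1)) ^ k = a ^ k * y ^ (j*k) + t * y ^ (j*k+1) := by
  intro k
  induction k with
  | zero => exact ⟨0, by simp⟩
  | succ k ih =>
    obtain ⟨t, ht⟩ := ih
    refine ⟨a * t + s * a ^ k + s * t * y, ?_⟩
    rw [pow_succ, ht, mul_add (a:=(a ^ k * y ^ (j * k) + t * y ^ (j * k + 1)))]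
    have h1 : j * (k+1) = j * k + j := by ring
    rw [h1]
    ring

/-- Shift invariance of the exponential sums. -/
lemma sum_shift {A : Type*} [CommMonoid A] {N q n : ℕ} (z : A) (hz : z ^ N = 1)
    (hdvd : N ∣ q ^ n - 1) (hq : 1 ≤ q) (a : ℕ) :
    ∀ i : ℕ, z ^ (a * q ^ (i + n)) = z ^ (a * q ^ i) := by
  intro i
  obtain ⟨t, ht⟩ := hdvd
  have hqn : q ^ n = N * t + 1 := by
    have h1 : 1 ≤ q ^ n := Nat.one_le_pow _ _ hq
    omega
  have : a * q ^ (i + n) = a * q ^ i + (a * q ^ i * t) * N := by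
    rw [pow_add, hqn]; ring
  have h2 : z ^ (a * q ^ i * t * N) = 1 := by
    rw [pow_mul', hz, one_pow]
  rw [this, pow_add, h2, mul_one]

lemma sum_shift' {A : Type*} [CommRing A] {N q n : ℕ} (z : A) (hz : z ^ N = 1)
    (hdvd : N ∣ q ^ n - 1) (hq : 1 ≤ q) (a : ℕ) :
    ∑ i ∈ range n, z ^ (a * q ^ (i+1)) = ∑ i ∈ range n, z ^ (a * q ^ i) := by
  have key : ∀ f : ℕ → A, f n = f 0 → ∑ i ∈ range n, f (i+1) = ∑ i ∈ range n, f i := by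
    intro f hf
    have h1 := Finset.sum_range_succ f n
    have h2 := Finset.sum_range_succ' f n
    rw [h1, hf] at h2
    exact (add_right_cancel h2).symm
  have := key (fun i => z ^ (a * q ^ i)) (by simpa using sum_shift z hz hdvd hq a 0)
  exact this

section Fside
variable {ℓ q n : ℕ} [Fact ℓ.Prime]

variable {ℓ q n : ℕ} [Fact ℓ.Prime]

lemma aux_geom (hn : orderOf (q : ZMod ℓ) = n) (d : ℕ) :
    ∑ i ∈ range n, ((q : ZMod ℓ) ^ d) ^ i = if n ∣ d then (n : ZMod ℓ) else 0 := by
  by_cases h : n ∣ d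
  · rw [if_pos h]
    have h1 : (q : ZMod ℓ) ^ d = 1 := by
      rw [← hn] at h
      exact orderOf_dvd_iff_pow_eq_one.mp h
    simp [h1]
  · rw [if_neg h]
    have h1 : (q : ZMod ℓ) ^ d ≠ 1 := by
      rw [← hn] at h
      exact fun hc => h (orderOf_dvd_iff_pow_eq_one.mpr hc)
    rw [geom_sum_eq h1]
    have h2 : ((q : ZMod ℓ) ^ d) ^ n = 1 := by
      rw [← pow_mul, mul_comm, pow_mul, ← hn, pow_orderOf_eq_one, one_pow]
    rw [h2, sub_self, zero_div]

lemma aux_choose_sum (hn : orderOf (q : ZMod ℓ) = n) (hnℓ : n < ℓ) {k : ℕ}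
    (hk1 : 1 ≤ k) (hkn : k ≤ n) :
    ∑ i ∈ range n, ((q ^ i).choose k : ZMod ℓ) =
      if k = n then (n : ZMod ℓ) * (Nat.factorial n : ZMod ℓ)⁻¹ else 0 := by
  have hfac : (Nat.factorial k : ZMod ℓ) ≠ 0 := by
    rw [Ne, ZMod.natCast_eq_zero_iff]
    intro hd
    exact absurd ((Nat.Prime.dvd_factorial (Fact.out)).mp hd) (by omega)
  -- express choice via descPochhammer
  have key : ∀ m : ℕ, ((m.choose k : ZMod ℓ)) * (Nat.factorial k : ZMod ℓ) = (descPochhammer (ZMod ℓ) k).eval (m : ZMod ℓ) := by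
    intro m
    rw [descPochhammer_eval_eq_descFactorial, Nat.descFactorial_eq_factorial_mul_choose]
    push_cast; ring
  set p := descPochhammer (ZMod ℓ) k with hp
  have hdeg : p.natDegree = k := descPochhammer_natDegree _ k
  have hmon : p.Monic := monic_descPochhammer _ k
  have hc0 : p.coeff 0 = 0 := by
    rw [coeff_zero_eq_eval_zero, hp]
    exact descPochhammer_ne_zero_eval_zero (R := ZMod ℓ) (n := k) (Nat.one_le_iff_ne_zero.mp hk1)
  have main : (∑ i ∈ range n, ((q ^ i).choose k : ZMod ℓ)) * (Nat.factorial k : ZMod ℓ) =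
      if k = n then (n : ZMod ℓ) else 0 := by
    rw [Finset.sum_mul]
    have e1 : ∀ i, ((q ^ i).choose k : ZMod ℓ) * (Nat.factorial k : ZMod ℓ) = ∑ d ∈ range (k+1), p.coeff d * ((q:ZMod ℓ)^d)^i := by
      intro i
      rw [key, eval_eq_sum_range, hdeg]
      push_cast
      refine Finset.sum_congr rfl fun d _ => ?_
      rw [← pow_mul, ← pow_mul, mul_comm d i]
    rw [Finset.sum_congr rfl (fun i _ => e1 i), Finset.sum_comm]
    have e2 : ∀ d, p.coeff d * ∑ i ∈ range n, ((q:ZMod ℓ)^d)^i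
        = p.coeff d * (if n ∣ d then (n : ZMod ℓ) else 0) := by
      intro d; rw [aux_geom hn]
    simp_rw [← Finset.mul_sum]
    rw [Finset.sum_congr rfl (fun d _ => e2 d)]
    have hcoeffk : p.coeff k = 1 := by
      have := hmon.coeff_natDegree
      rwa [hdeg] at this
    have hsplit : range (k+1) = insert 0 (insert k (Finset.Ioo 0 k)) := by
      ext d
      simp only [Finset.mem_range, Finset.mem_insert, Finset.mem_Ioo]
      omega
    rw [hsplit, Finset.sum_insert (by simp; omega), Finset.sum_insert (by simp)]
    have hrest : ∑ d ∈ Finset.Ioo 0 k, p.coeff d * (if n ∣ d then (n : ZMod ℓ) else 0) = 0 := by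
      refine Finset.sum_eq_zero fun d hd => ?_
      simp only [Finset.mem_Ioo] at hd
      have hnd : ¬ n ∣ d := by
        intro hdvd
        have := Nat.le_of_dvd hd.1 hdvd
        omega
      rw [if_neg hnd, mul_zero]
    rw [hrest, hc0, zero_mul, zero_add, add_zero, hcoeffk, one_mul]
    by_cases hkn' : k = n
    · rw [if_pos (hkn' ▸ dvd_rfl), if_pos hkn']
    · have : ¬ n ∣ k := by
        intro hdvd
        have := Nat.le_of_dvd (by omega) hdvd
        omega
      rw [if_neg this, if_neg hkn']
  -- divide by k!
  have := congrArg (· * (Nat.factorial k : ZMod ℓ)⁻¹) main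
  rw [mul_assoc, mul_inv_cancel₀ hfac, mul_one] at this
  rw [this]
  by_cases hkn' : k = n
  · subst hkn'; simp
  · simp [hkn']



lemma aux_q2 : (X : (ZMod ℓ)[X]) ^ 2 ∣ (1 + X) ^ q - 1 - C (q : ZMod ℓ) * X := by
  rw [X_pow_dvd_iff]
  intro d hd
  interval_cases d
  · simp [coeff_one_add_X_pow]
  · simp [coeff_one_add_X_pow, coeff_one]

lemma aux_lead (hn : orderOf (q : ZMod ℓ) = n) (hnℓ : n < ℓ) (h2n : 2 ≤ n) :
    (X : (ZMod ℓ)[X]) ^ (n+1) ∣ (∑ i ∈ range n, (1 + X) ^ (q ^ i)) - C (n : ZMod ℓ)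
      - C ((n : ZMod ℓ) * (Nat.factorial n : ZMod ℓ)⁻¹) * X ^ n := by
  rw [X_pow_dvd_iff]
  intro d hd
  rw [coeff_sub, coeff_sub, finset_sum_coeff]
  simp_rw [coeff_one_add_X_pow]
  rw [coeff_C, coeff_C_mul, coeff_X_pow]
  rcases Nat.eq_zero_or_pos d with rfl | hd1
  · simp [Nat.choose_zero_right]
    omega
  · have hdn : d ≤ n := by omega
    rw [aux_choose_sum hn hnℓ hd1 hdn]
    by_cases hdn' : d = n
    · rw [if_pos hdn', if_neg (by omega), if_pos hdn']
      ring
    · rw [if_neg hdn', if_neg (by omega), if_neg hdn']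
      ring


end Fside
section Bside
variable {ℓ q n N : ℕ} [Fact ℓ.Prime]

theorem mod_ell_main (hn : orderOf (q : ZMod ℓ) = n) (hnℓ : n < ℓ) (h2n : 2 ≤ n)
    (hq1 : 1 ≤ q) (hNr : ∃ r, N = ℓ ^ r) (hdvd : N ∣ q ^ n - 1)
    (τ : AdjoinRoot ((X : (ZMod ℓ)[X]) ^ N - 1) →ₐ[ZMod ℓ] AdjoinRoot ((X : (ZMod ℓ)[X]) ^ N - 1))
    (hτ : τ (AdjoinRoot.root _) = (AdjoinRoot.root _) ^ q) :
    ∀ x, τ x = x →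
      x ∈ Algebra.adjoin (ZMod ℓ)
        {∑ i ∈ range n, (AdjoinRoot.root ((X : (ZMod ℓ)[X]) ^ N - 1)) ^ q ^ i} := by
  have hN1 : 1 ≤ N := by
    obtain ⟨r, rfl⟩ := hNr
    exact Nat.one_le_pow _ _ (Fact.out : Nat.Prime ℓ).pos
  set ρ : AdjoinRoot ((X : (ZMod ℓ)[X]) ^ N - 1) := AdjoinRoot.root _ with hρ
  set y := ρ - 1 with hy
  set εB := ∑ i ∈ range n, ρ ^ q ^ i with hεB
  set A := algebraMap (ZMod ℓ) (AdjoinRoot ((X : (ZMod ℓ)[X]) ^ N - 1)) with hA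
  set Q : ZMod ℓ := (q : ZMod ℓ) with hQ
  set c₀ : ZMod ℓ := (n : ZMod ℓ) * (Nat.factorial n : ZMod ℓ)⁻¹ with hc₀def
  have hfactor : (X - C 1 : (ZMod ℓ)[X]) ^ N = X ^ N - 1 := by
    obtain ⟨r, rfl⟩ := hNr
    rw [map_one, sub_pow_char_pow, one_pow]
  have hρN : ρ ^ N = 1 := by
    have h0 : (AdjoinRoot.mk ((X : (ZMod ℓ)[X]) ^ N - 1)) ((X : (ZMod ℓ)[X]) ^ N - 1) = 0 :=
      AdjoinRoot.mk_self
    rw [map_sub, map_pow, map_one, AdjoinRoot.mk_X] at h0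
    linear_combination h0
  have hymk : y = AdjoinRoot.mk _ (X - C 1) := by
    rw [hy, map_sub, AdjoinRoot.mk_X, AdjoinRoot.mk_C, map_one]
  have hyN : y ^ N = 0 := by
    rw [hymk, ← map_pow, hfactor, AdjoinRoot.mk_self]
  have hQn : Q ^ n = 1 := by rw [hQ, ← hn]; exact pow_orderOf_eq_one _
  have hc₀ : c₀ ≠ 0 := by
    rw [hc₀def]
    have h1 : ((n : ZMod ℓ)) ≠ 0 := by
      rw [Ne, ZMod.natCast_eq_zero_iff]
      intro hdd
      have := Nat.le_of_dvd (by omega) hdd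
      omega
    have h2 : ((Nat.factorial n : ZMod ℓ)) ≠ 0 := by
      rw [Ne, ZMod.natCast_eq_zero_iff]
      intro hdd
      exact absurd ((Nat.Prime.dvd_factorial (Fact.out)).mp hdd) (by omega)
    exact mul_ne_zero h1 (inv_ne_zero h2)
  -- non-divisibility
  have b3 : ∀ k : ℕ, k < N → ¬ (y ^ (k+1) ∣ y ^ k) := by
    intro k hk hdvd'
    obtain ⟨b, hb⟩ := hdvd'
    obtain ⟨p, rfl⟩ := AdjoinRoot.mk_surjective b
    rw [hymk, ← map_pow, ← map_pow, ← map_mul, ← sub_eq_zero, ← map_sub,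
      AdjoinRoot.mk_eq_zero] at hb
    have h2 : (X - C 1 : (ZMod ℓ)[X]) ^ (k+1) ∣ (X - C 1) ^ k := by
      have hNdvd : (X - C 1 : (ZMod ℓ)[X]) ^ (k+1) ∣ X ^ N - 1 :=
        hfactor ▸ pow_dvd_pow _ (by omega)
      have h3 := dvd_add (hNdvd.trans hb) (Dvd.intro p rfl)
      simpa using h3
    have hne : ((X - C 1 : (ZMod ℓ)[X]) ^ k) ≠ 0 := ((monic_X_sub_C (1:ZMod ℓ)).pow k).ne_zero
    have h4 := Polynomial.natDegree_le_of_dvd h2 hne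
    rw [natDegree_pow, natDegree_pow, natDegree_X_sub_C] at h4
    omega
  -- the residue map χ
  have heval1 : ((X : (ZMod ℓ)[X]) ^ N - 1).eval₂ (RingHom.id (ZMod ℓ)) 1 = 0 := by simp
  set χ := AdjoinRoot.lift (RingHom.id (ZMod ℓ)) 1 heval1 with hχ
  have hker : ∀ u, ∃ w, u - A (χ u) = y * w := by
    intro u
    obtain ⟨p, rfl⟩ := AdjoinRoot.mk_surjective u
    have h1 : χ (AdjoinRoot.mk _ p) = p.eval 1 := by
      rw [hχ, AdjoinRoot.lift_mk, eval₂_eq_eval_map, Polynomial.map_id]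
    have h2 : (X - C 1 : (ZMod ℓ)[X]) ∣ p - C (p.eval 1) := by
      rw [dvd_iff_isRoot]
      simp [IsRoot]
    obtain ⟨w, hw⟩ := h2
    refine ⟨AdjoinRoot.mk _ w, ?_⟩
    rw [h1, hA, AdjoinRoot.algebraMap_eq, ← AdjoinRoot.mk_C (f := (X : (ZMod ℓ)[X]) ^ N - 1),
      ← map_sub, hw, map_mul, ← hymk]
  -- τ on y
  have hτρ : τ ρ = ρ ^ q := hτ
  have hτy : ∃ s, τ y = A Q * y + s * y ^ 2 := by
    have h1 : y ^ 2 ∣ τ y - A Q * y := by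
      have hdvd2 := aux_q2 (ℓ := ℓ) (q := q)
      have h2 := map_dvd (Polynomial.aeval y) hdvd2
      simp only [map_sub, map_pow, map_add, map_one, map_mul, aeval_X, aeval_C] at h2
      have h3 : (1 : AdjoinRoot ((X : (ZMod ℓ)[X]) ^ N - 1)) + y = ρ := by rw [hy]; ring
      rw [h3] at h2
      have h4 : τ y = ρ ^ q - 1 := by rw [hy, map_sub, map_one, hτρ]
      have h5 : τ y - A Q * y = ρ ^ q - 1 - A Q * y := by rw [h4]
      rw [h5]
      exact h2
    obtain ⟨s, hs⟩ := h1
    exact ⟨s, by linear_combination hs⟩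
  obtain ⟨s, hs⟩ := hτy
  -- leading term of g = εB - A n
  have hglead : ∃ s₂, εB - A n = A c₀ * y ^ n + s₂ * y ^ (n+1) := by
    have h1 := aux_lead hn hnℓ h2n
    have h2 := map_dvd (Polynomial.aeval y) h1
    simp only [map_sub, map_pow, map_add, map_one, map_mul, map_sum, aeval_X, aeval_C] at h2
    have h3 : (1 : AdjoinRoot ((X : (ZMod ℓ)[X]) ^ N - 1)) + y = ρ := by rw [hy]; ring
    rw [h3] at h2
    obtain ⟨s₂, hs₂⟩ := h2
    exact ⟨s₂, by rw [hεB, hc₀def, map_mul]; linear_combination hs₂⟩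
  obtain ⟨s₂, hs₂⟩ := hglead
  -- invariance of εB
  have hτε : τ εB = εB := by
    rw [hεB, map_sum]
    have h1 : ∀ i, τ (ρ ^ q ^ i) = ρ ^ (1 * q ^ (i+1)) := by
      intro i
      rw [map_pow, hτρ, ← pow_mul, one_mul, pow_succ, mul_comm (q ^ i) q, pow_mul]
    rw [Finset.sum_congr rfl (fun i _ => h1 i), sum_shift' ρ hρN hdvd hq1 1]
    simp
  -- elements of the adjoin are invariant
  have hadj : ∀ b, b ∈ Algebra.adjoin (ZMod ℓ) {εB} → τ b = b := by
    intro b hb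
    have hle : Algebra.adjoin (ZMod ℓ) {εB} ≤ AlgHom.equalizer τ (AlgHom.id (ZMod ℓ) _) :=
      Algebra.adjoin_le (by
        intro z hz
        rw [Set.mem_singleton_iff] at hz
        subst hz
        exact hτε)
    exact hle hb
  -- main descending induction
  have desc : ∀ d : ℕ, ∀ x, τ x = x → x ∈ Ideal.span {y} ^ (N - d) →
      x ∈ Algebra.adjoin (ZMod ℓ) {εB} := by
    intro d
    induction d with
    | zero =>
      intro x hx hmem
      rw [Nat.sub_zero, Ideal.span_singleton_pow, Ideal.mem_span_singleton] at hmem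
      rw [hyN, zero_dvd_iff] at hmem
      rw [hmem]
      exact Subalgebra.zero_mem _
    | succ d ih =>
      intro x hx hmem
      set k := N - (d+1) with hk
      have hkN : k < N := by omega
      rw [Ideal.span_singleton_pow, Ideal.mem_span_singleton] at hmem
      obtain ⟨u, hu⟩ := hmem
      obtain ⟨w, hw⟩ := hker u
      set c := χ u with hc
      have hxdec : x = A c * y ^ k + w * y ^ (k+1) := by
        rw [hu]
        have : u = A c + y * w := by linear_combination hw
        rw [this]
        ring
      have hJle : Ideal.span {y} ^ (N - d) ≥ Ideal.span {y} ^ (k + 1) :=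
        Ideal.pow_le_pow_right (by omega)
      by_cases hc0 : c = 0
      · apply ih x hx
        apply hJle
        rw [Ideal.span_singleton_pow, Ideal.mem_span_singleton]
        rw [hxdec, hc0, map_zero, zero_mul, zero_add]
        exact ⟨w, by ring⟩
      · -- first show Q ^ k = 1
        have hQk : Q ^ k = 1 := by
          by_contra hQk
          -- compute τ x - x
          obtain ⟨t, ht⟩ := pow_lead y (A Q) s 1 k
          norm_num at ht
          have hτyk : (τ y) ^ k = (A Q) ^ k * y ^ k + t * y ^ (k+1) := by
            rw [hs]
            exact ht
          have hydvd : ∃ v, (τ y) ^ (k+1) = v * y ^ (k+1) := by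
            refine ⟨(A Q + s * y) ^ (k+1), ?_⟩
            rw [hs]
            rw [show A Q * y + s * y ^ 2 = (A Q + s * y) * y by ring, mul_pow]
          obtain ⟨v, hv⟩ := hydvd
          have hτx : τ x = A c * ((A Q) ^ k * y ^ k + t * y ^ (k+1)) + τ w * (v * y ^ (k+1)) := by
            conv_lhs => rw [hxdec]
            rw [map_add, map_mul, map_mul, map_pow, map_pow, hτyk, hv, AlgHom.commutes]
          have hzero : A (c * (Q ^ k - 1)) * y ^ k =
              -(A c * t + τ w * v - w) * y ^ (k+1) := by
            have h6 : τ x - x = 0 := by rw [hx, sub_self]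
            rw [hτx, hxdec] at h6
            rw [map_mul, map_sub, map_one, map_pow]
            linear_combination h6
          have hunit : IsUnit (A (c * (Q ^ k - 1))) := by
            refine IsUnit.map A (Ne.isUnit ?_)
            exact mul_ne_zero hc0 (sub_ne_zero_of_ne hQk)
          have : y ^ (k+1) ∣ y ^ k := by
            have h7 : y ^ (k+1) ∣ A (c * (Q ^ k - 1)) * y ^ k :=
              ⟨-(A c * t + τ w * v - w), by linear_combination hzero⟩
            exact (hunit.dvd_mul_left).mp h7
          exact b3 k hkN this
        have hnk : n ∣ k := by
          rw [← hn]
          exact orderOf_dvd_of_pow_eq_one hQk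
        obtain ⟨m, hm⟩ := hnk
        -- build γ
        obtain ⟨t₂, ht₂⟩ := pow_lead y (A c₀) s₂ n m
        set γ := A (c * (c₀ ^ m)⁻¹) * (εB - A n) ^ m with hγ
        have hγdec : γ = A c * y ^ k + (A (c * (c₀ ^ m)⁻¹) * t₂) * y ^ (k+1) := by
          rw [hγ, hs₂, ht₂]
          have h8 : A (c * (c₀ ^ m)⁻¹) * (A c₀ ^ m) = A c := by
            rw [← map_pow, ← map_mul, mul_assoc, inv_mul_cancel₀ (pow_ne_zero m hc₀), mul_one]
          rw [mul_add, ← mul_assoc, h8, hm]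
          ring
        have hγadj : γ ∈ Algebra.adjoin (ZMod ℓ) {εB} := by
          apply Subalgebra.mul_mem
          · exact Subalgebra.algebraMap_mem _ _
          · apply Subalgebra.pow_mem
            apply Subalgebra.sub_mem
            · exact Algebra.subset_adjoin rfl
            · exact Subalgebra.algebraMap_mem _ _
        have hrest : x - γ ∈ Ideal.span {y} ^ (N - d) := by
          apply hJle
          rw [Ideal.span_singleton_pow, Ideal.mem_span_singleton]
          rw [hxdec, hγdec]
          refine ⟨w - A (c * (c₀ ^ m)⁻¹) * t₂, ?_⟩
          ring
        have hinv : τ (x - γ) = x - γ := by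
          rw [map_sub, hx, hadj γ hγadj]
        have := ih (x - γ) hinv hrest
        have hfin := Subalgebra.add_mem _ this hγadj
        simpa using hfin
  intro x hx
  have h9 := desc N x hx
  rw [Nat.sub_self, pow_zero, Ideal.one_eq_top] at h9
  exact h9 Submodule.mem_top

end Bside
section Rside
variable {ℓ q n N : ℕ} [Fact ℓ.Prime]

set_option maxHeartbeats 1000000 in
theorem main_R (hn : orderOf (q : ZMod ℓ) = n) (hnℓ : n < ℓ) (h2n : 2 ≤ n)
    (hq1 : 1 ≤ q) (hNr : ∃ r, N = ℓ ^ r) (hdvd : N ∣ q ^ n - 1) (a : ℕ) :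
    (∑ i ∈ range n, (AdjoinRoot.root ((X : (ℤ_[ℓ])[X]) ^ N - 1)) ^ (a * q ^ i)) ∈
      Algebra.adjoin ℤ_[ℓ] {∑ i ∈ range n, (AdjoinRoot.root ((X : (ℤ_[ℓ])[X]) ^ N - 1)) ^ q ^ i} := by
  have hN1 : 1 ≤ N := by
    obtain ⟨r, rfl⟩ := hNr
    exact Nat.one_le_pow _ _ (Fact.out : Nat.Prime ℓ).pos
  have hmonic : ((X : (ℤ_[ℓ])[X]) ^ N - 1).Monic := by
    have := monic_X_pow_sub_C (1 : ℤ_[ℓ]) (n := N) (by omega)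
    rwa [map_one] at this
  set ρ : AdjoinRoot ((X : (ℤ_[ℓ])[X]) ^ N - 1) := AdjoinRoot.root _ with hρ
  set ρB : AdjoinRoot ((X : (ZMod ℓ)[X]) ^ N - 1) := AdjoinRoot.root _ with hρB
  have hρN : ρ ^ N = 1 := by
    have h0 : (AdjoinRoot.mk ((X : (ℤ_[ℓ])[X]) ^ N - 1)) ((X : (ℤ_[ℓ])[X]) ^ N - 1) = 0 :=
      AdjoinRoot.mk_self
    rw [map_sub, map_pow, map_one, AdjoinRoot.mk_X] at h0
    linear_combination h0
  have hρBN : ρB ^ N = 1 := by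
    have h0 : (AdjoinRoot.mk ((X : (ZMod ℓ)[X]) ^ N - 1)) ((X : (ZMod ℓ)[X]) ^ N - 1) = 0 :=
      AdjoinRoot.mk_self
    rw [map_sub, map_pow, map_one, AdjoinRoot.mk_X] at h0
    linear_combination h0
  -- the endomorphisms
  have hτcond : Polynomial.aeval (ρ ^ q) ((X : (ℤ_[ℓ])[X]) ^ N - 1) = 0 := by
    rw [map_sub, map_pow, aeval_X, map_one, pow_right_comm, hρN, one_pow, sub_self]
  set τR := AdjoinRoot.liftAlgHom ((X : (ℤ_[ℓ])[X]) ^ N - 1) (Algebra.ofId _ _) (ρ ^ q) hτcond with hτR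
  have hτρ : τR ρ = ρ ^ q := by rw [hτR]; exact AdjoinRoot.liftAlgHom_root ..
  have hτBcond : Polynomial.aeval (ρB ^ q) ((X : (ZMod ℓ)[X]) ^ N - 1) = 0 := by
    rw [map_sub, map_pow, aeval_X, map_one, pow_right_comm, hρBN, one_pow, sub_self]
  set τB := AdjoinRoot.liftAlgHom ((X : (ZMod ℓ)[X]) ^ N - 1) (Algebra.ofId _ _) (ρB ^ q) hτBcond with hτB
  have hτBρ : τB ρB = ρB ^ q := by rw [hτB]; exact AdjoinRoot.liftAlgHom_root ..
  -- the reduction map π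
  have hsurj : Function.Surjective (PadicInt.toZMod (p := ℓ)) := by
    intro c
    refine ⟨((c.val : ℕ) : ℤ_[ℓ]), ?_⟩
    rw [map_natCast, ZMod.natCast_val, ZMod.cast_id]
  have hπcond : Polynomial.eval₂
      ((algebraMap (ZMod ℓ) (AdjoinRoot ((X : (ZMod ℓ)[X]) ^ N - 1))).comp PadicInt.toZMod)
      ρB ((X : (ℤ_[ℓ])[X]) ^ N - 1) = 0 := by
    rw [eval₂_sub, eval₂_X_pow, eval₂_one, hρBN, sub_self]
  set π := AdjoinRoot.lift
      ((algebraMap (ZMod ℓ) (AdjoinRoot ((X : (ZMod ℓ)[X]) ^ N - 1))).comp PadicInt.toZMod)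
      ρB hπcond with hπ
  have hπmk : ∀ p : (ℤ_[ℓ])[X],
      π (AdjoinRoot.mk _ p) = AdjoinRoot.mk _ (p.map PadicInt.toZMod) := by
    intro p
    rw [hπ, AdjoinRoot.lift_mk, ← AdjoinRoot.aeval_eq, aeval_def, eval₂_map]
  have hπroot : π ρ = ρB := AdjoinRoot.lift_root _
  have hπalg : ∀ c : ℤ_[ℓ], π (algebraMap ℤ_[ℓ] _ c) =
      algebraMap (ZMod ℓ) _ (PadicInt.toZMod c) := by
    intro c
    rw [AdjoinRoot.algebraMap_eq]
    exact AdjoinRoot.lift_of _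
  have hπcomp : (π.comp (algebraMap ℤ_[ℓ] (AdjoinRoot ((X : (ℤ_[ℓ])[X]) ^ N - 1)))) =
      ((algebraMap (ZMod ℓ) (AdjoinRoot ((X : (ZMod ℓ)[X]) ^ N - 1))).comp PadicInt.toZMod) :=
    RingHom.ext hπalg
  -- commutation π ∘ τR = τB ∘ π
  have hcomm : ∀ z, π (τR z) = τB (π z) := by
    intro z
    obtain ⟨p, rfl⟩ := AdjoinRoot.mk_surjective z
    have e1 : τR (AdjoinRoot.mk _ p) = Polynomial.aeval (ρ ^ q) p := by
      rw [hτR]; exact AdjoinRoot.liftAlgHom_mk ..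
    have e2 : π (Polynomial.aeval (ρ ^ q) p) =
        eval₂ ((algebraMap (ZMod ℓ) _).comp PadicInt.toZMod) (ρB ^ q) p := by
      rw [aeval_def, hom_eval₂, hπcomp, map_pow, hπroot]
    have e3 : π (AdjoinRoot.mk _ p) = AdjoinRoot.mk _ (p.map PadicInt.toZMod) := hπmk p
    have e4 : τB (AdjoinRoot.mk _ (p.map PadicInt.toZMod)) =
        Polynomial.aeval (ρB ^ q) (p.map PadicInt.toZMod) := by
      rw [hτB]; exact AdjoinRoot.liftAlgHom_mk ..
    rw [e1, e2, e3, e4, aeval_def, eval₂_map]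
  -- π on aeval of εR
  have hπeps : π (∑ i ∈ range n, ρ ^ q ^ i) = ∑ i ∈ range n, ρB ^ q ^ i := by
    rw [map_sum]
    exact Finset.sum_congr rfl fun i _ => by rw [map_pow, hπroot]
  have hπaeval : ∀ h : (ℤ_[ℓ])[X],
      π (Polynomial.aeval (∑ i ∈ range n, ρ ^ q ^ i) h) =
        Polynomial.aeval (∑ i ∈ range n, ρB ^ q ^ i) (h.map PadicInt.toZMod) := by
    intro h
    rw [aeval_def, hom_eval₂, hπcomp, hπeps, aeval_def, eval₂_map]
  -- kernel of π
  have hkerπ : ∀ z, π z = 0 → ∃ z', z = (ℓ : ℤ_[ℓ]) • z' := by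
    intro z hz
    obtain ⟨p, rfl⟩ := AdjoinRoot.mk_surjective z
    rw [hπmk, AdjoinRoot.mk_eq_zero] at hz
    obtain ⟨u, hu⟩ := hz
    obtain ⟨U, hU⟩ := Polynomial.map_surjective _ hsurj u
    have hmap0 : (p - ((X : (ℤ_[ℓ])[X]) ^ N - 1) * U).map PadicInt.toZMod = 0 := by
      rw [Polynomial.map_sub, Polynomial.map_mul, Polynomial.map_sub, Polynomial.map_pow,
        Polynomial.map_X, Polynomial.map_one, hU, ← hu]
      ring
    have hdvdC : C (ℓ : ℤ_[ℓ]) ∣ (p - ((X : (ℤ_[ℓ])[X]) ^ N - 1) * U) := by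
      rw [Polynomial.C_dvd_iff_dvd_coeff]
      intro i
      have hci : PadicInt.toZMod ((p - ((X : (ℤ_[ℓ])[X]) ^ N - 1) * U).coeff i) = 0 := by
        rw [← Polynomial.coeff_map, hmap0, Polynomial.coeff_zero]
      have : (p - ((X : (ℤ_[ℓ])[X]) ^ N - 1) * U).coeff i ∈ RingHom.ker
          (PadicInt.toZMod (p := ℓ)) := hci
      rw [PadicInt.ker_toZMod, PadicInt.maximalIdeal_eq_span_p, Ideal.mem_span_singleton] at this
      exact this
    obtain ⟨g, hg⟩ := hdvdC
    refine ⟨AdjoinRoot.mk _ g, ?_⟩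
    have : p = C (ℓ : ℤ_[ℓ]) * g + ((X : (ℤ_[ℓ])[X]) ^ N - 1) * U := by linear_combination hg
    rw [this, map_add, map_mul, map_mul]
    have h0 : AdjoinRoot.mk ((X : (ℤ_[ℓ])[X]) ^ N - 1) ((X : (ℤ_[ℓ])[X]) ^ N - 1) = 0 :=
      AdjoinRoot.mk_self
    rw [h0, zero_mul, add_zero, AdjoinRoot.mk_C, Algebra.smul_def, AdjoinRoot.algebraMap_eq]
  -- torsion-freeness
  have htf : ∀ z : AdjoinRoot ((X : (ℤ_[ℓ])[X]) ^ N - 1), (ℓ : ℤ_[ℓ]) • z = 0 → z = 0 := by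
    intro z hz
    set pb := AdjoinRoot.powerBasis' hmonic with hpb
    have h1 := congrArg pb.basis.repr hz
    rw [map_smul, map_zero] at h1
    have hℓ0 : (ℓ : ℤ_[ℓ]) ≠ 0 := Nat.cast_ne_zero.mpr (Fact.out : Nat.Prime ℓ).ne_zero
    have h2 : pb.basis.repr z = 0 := by
      ext i
      have := congrArg (fun v => v i) h1
      simp only [Finsupp.smul_apply, smul_eq_mul, Finsupp.coe_zero, Pi.zero_apply] at this ⊢
      rcases mul_eq_zero.mp this with h | h
      · exact absurd h hℓ0
      · exact h
    exact (LinearEquiv.map_eq_zero_iff pb.basis.repr).mp h2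
  -- invariance of εR and M
  have hτε : τR (∑ i ∈ range n, ρ ^ q ^ i) = ∑ i ∈ range n, ρ ^ q ^ i := by
    rw [map_sum]
    have h1 : ∀ i, τR (ρ ^ q ^ i) = ρ ^ (1 * q ^ (i+1)) := by
      intro i
      rw [map_pow, hτρ, ← pow_mul, one_mul, pow_succ, mul_comm (q ^ i) q, pow_mul]
    rw [Finset.sum_congr rfl (fun i _ => h1 i), sum_shift' ρ hρN hdvd hq1 1]
    simp
  set M := Algebra.adjoin ℤ_[ℓ] {∑ i ∈ range n, ρ ^ q ^ i} with hM
  have hadjR : ∀ b, b ∈ M → τR b = b := by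
    intro b hb
    have hle : M ≤ AlgHom.equalizer τR (AlgHom.id ℤ_[ℓ] _) :=
      Algebra.adjoin_le (by
        intro z hz
        rw [Set.mem_singleton_iff] at hz
        subst hz
        exact hτε)
    exact hle hb
  -- the one-step approximation
  have step : ∀ z, τR z = z → ∃ m ∈ M, ∃ z', τR z' = z' ∧ z = m + (ℓ : ℤ_[ℓ]) • z' := by
    intro z hz
    have hπz : τB (π z) = π z := by rw [← hcomm, hz]
    have hmem := mod_ell_main hn hnℓ h2n hq1 hNr hdvd τB hτBρ (π z) hπz
    rw [Algebra.adjoin_singleton_eq_range_aeval] at hmem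
    obtain ⟨hb, hhb0⟩ := hmem
    have hhb : (Polynomial.aeval (∑ i ∈ range n, ρB ^ q ^ i)) hb = π z := hhb0
    obtain ⟨H, hH⟩ := Polynomial.map_surjective _ hsurj hb
    refine ⟨Polynomial.aeval (∑ i ∈ range n, ρ ^ q ^ i) H, ?_, ?_⟩
    · rw [hM, Algebra.adjoin_singleton_eq_range_aeval]
      exact ⟨H, rfl⟩
    · have hπ0 : π (z - Polynomial.aeval (∑ i ∈ range n, ρ ^ q ^ i) H) = 0 := by
        rw [map_sub, hπaeval, hH, hhb, sub_self]
      obtain ⟨z', hz'⟩ := hkerπ _ hπ0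
      refine ⟨z', ?_, by linear_combination hz'⟩
      -- z' is invariant
      have hminv : τR (Polynomial.aeval (∑ i ∈ range n, ρ ^ q ^ i) H) =
          Polynomial.aeval (∑ i ∈ range n, ρ ^ q ^ i) H := by
        apply hadjR
        rw [hM, Algebra.adjoin_singleton_eq_range_aeval]
        exact ⟨H, rfl⟩
      have h3 : (ℓ : ℤ_[ℓ]) • (τR z' - z') = 0 := by
        have h4 : τR ((ℓ : ℤ_[ℓ]) • z') = (ℓ : ℤ_[ℓ]) • τR z' := map_smul τR _ _
        have h5 : τR (z - Polynomial.aeval (∑ i ∈ range n, ρ ^ q ^ i) H)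
            = z - Polynomial.aeval (∑ i ∈ range n, ρ ^ q ^ i) H := by
          rw [map_sub, hz, hminv]
        rw [hz'] at h5
        rw [h4] at h5
        rw [smul_sub]
        rw [h5, sub_self]
      have := htf _ h3
      have h6 : τR z' = z' := by
        have := sub_eq_zero.mp this
        exact this
      exact h6
  -- iterate
  have iter : ∀ K : ℕ, ∀ z, τR z = z →
      ∃ m ∈ M, ∃ z', τR z' = z' ∧ z = m + ((ℓ : ℤ_[ℓ]) ^ K) • z' := by
    intro K
    induction K with
    | zero => intro z hz; exact ⟨0, Subalgebra.zero_mem _, z, hz, by simp⟩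
    | succ K ih =>
      intro z hz
      obtain ⟨m, hm, z', hz', hzeq⟩ := ih z hz
      obtain ⟨m', hm', z'', hz'', hzeq'⟩ := step z' hz'
      refine ⟨m + ((ℓ : ℤ_[ℓ]) ^ K) • m', ?_, z'', hz'', ?_⟩
      · exact Subalgebra.add_mem _ hm (Subalgebra.smul_mem _ hm' _)
      · rw [hzeq, hzeq', smul_add, add_assoc, smul_smul, ← pow_succ]
  -- Krull intersection
  have krull : ∀ z, τR z = z → z ∈ M := by
    intro z hz
    haveI : Module.Finite ℤ_[ℓ] (AdjoinRoot ((X : (ℤ_[ℓ])[X]) ^ N - 1)) :=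
      Module.Finite.of_basis (AdjoinRoot.powerBasis' hmonic).basis
    set Msub := Subalgebra.toSubmodule M with hMsub
    haveI : Module.Finite ℤ_[ℓ] (AdjoinRoot ((X : (ℤ_[ℓ])[X]) ^ N - 1) ⧸ Msub) :=
      Module.Finite.quotient ℤ_[ℓ] Msub
    have hIne : (Ideal.span {(ℓ : ℤ_[ℓ])}) ≠ ⊤ := by
      rw [← PadicInt.maximalIdeal_eq_span_p]
      exact (IsLocalRing.maximalIdeal.isMaximal _).ne_top
    have hbot := Ideal.iInf_pow_smul_eq_bot_of_isLocalRing
      (R := ℤ_[ℓ]) (M := AdjoinRoot ((X : (ℤ_[ℓ])[X]) ^ N - 1) ⧸ Msub)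
      (I := Ideal.span {(ℓ : ℤ_[ℓ])}) hIne
    have hmem : Submodule.Quotient.mk (p := Msub) z ∈
        (⨅ i : ℕ, (Ideal.span {(ℓ : ℤ_[ℓ])}) ^ i • (⊤ : Submodule ℤ_[ℓ] _)) := by
      rw [Submodule.mem_iInf]
      intro K
      obtain ⟨m, hm, z', _, hzeq⟩ := iter K z hz
      have : Submodule.Quotient.mk (p := Msub) z =
          ((ℓ : ℤ_[ℓ]) ^ K) • Submodule.Quotient.mk (p := Msub) z' := by
        rw [hzeq]
        have hm0 : Submodule.Quotient.mk (p := Msub) m = 0 :=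
          (Submodule.Quotient.mk_eq_zero _).mpr hm
        rw [Submodule.Quotient.mk_add, hm0, zero_add, Submodule.Quotient.mk_smul]
      rw [this, Ideal.span_singleton_pow]
      exact Submodule.smul_mem_smul (Ideal.mem_span_singleton_self _) Submodule.mem_top
    rw [hbot, Submodule.mem_bot] at hmem
    exact (Submodule.Quotient.mk_eq_zero _).mp hmem
  -- apply to the orbit sum
  apply krull
  rw [map_sum]
  have h1 : ∀ i, τR (ρ ^ (a * q ^ i)) = ρ ^ (a * q ^ (i+1)) := by
    intro i
    rw [map_pow, hτρ, ← pow_mul]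
    congr 1
    ring
  rw [Finset.sum_congr rfl (fun i _ => h1 i), sum_shift' ρ hρN hdvd hq1 a]

end Rside
theorem stmt_19 (ℓ q n r : ℕ) [Fact ℓ.Prime] (hq : IsPrimePow q) (hndvd : ¬ ℓ ∣ q)
    (hn : orderOf (q : ZMod ℓ) = n) (h2n : 2 ≤ n) (hnℓ : n < ℓ)
    (hr : r = padicValNat ℓ (q ^ n - 1))
    (L : Type*) [Field L] [Algebra ℚ_[ℓ] L] [Algebra ℤ_[ℓ] L]
    [IsScalarTower ℤ_[ℓ] ℚ_[ℓ] L]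
    (ζ : L) (hζ : IsPrimitiveRoot ζ (ℓ ^ r)) (j : ℤ) :
    ∃ h : Polynomial ℤ_[ℓ],
      Polynomial.aeval (∑ i ∈ Finset.range n, ζ ^ q ^ i) h =
        ∑ i ∈ Finset.range n, ζ ^ (j * (q : ℤ) ^ i) := by
  have hq2 : 2 ≤ q := hq.two_le
  have hN1 : 1 ≤ ℓ ^ r := Nat.one_le_pow _ _ (Fact.out : Nat.Prime ℓ).pos
  have hdvdN : ℓ ^ r ∣ q ^ n - 1 := by
    rw [hr]
    exact pow_padicValNat_dvd
  -- the evaluation homomorphism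
  have hζN : ζ ^ (ℓ ^ r) = 1 := hζ.pow_eq_one
  have hψcond : Polynomial.aeval ζ ((X : (ℤ_[ℓ])[X]) ^ (ℓ ^ r) - 1) = 0 := by
    rw [map_sub, map_pow, aeval_X, map_one, hζN, sub_self]
  set ψ := AdjoinRoot.liftAlgHom ((X : (ℤ_[ℓ])[X]) ^ (ℓ ^ r) - 1) (Algebra.ofId _ _) ζ hψcond with hψ
  have hψρ : ψ (AdjoinRoot.root _) = ζ := by rw [hψ]; exact AdjoinRoot.liftAlgHom_root ..
  -- the exponent
  set a : ℕ := (j % ((ℓ ^ r : ℕ) : ℤ)).toNat with ha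
  -- main result
  have hmem := main_R hn hnℓ h2n (by omega) ⟨r, rfl⟩ hdvdN a
  rw [Algebra.adjoin_singleton_eq_range_aeval] at hmem
  obtain ⟨h, hh0⟩ := hmem
  have hh : Polynomial.aeval
      (∑ i ∈ Finset.range n, (AdjoinRoot.root ((X : (ℤ_[ℓ])[X]) ^ (ℓ ^ r) - 1)) ^ q ^ i) h =
      ∑ i ∈ Finset.range n, (AdjoinRoot.root ((X : (ℤ_[ℓ])[X]) ^ (ℓ ^ r) - 1)) ^ (a * q ^ i) :=
    hh0
  refine ⟨h, ?_⟩
  -- push through ψ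
  have e1 := congrArg ψ hh
  rw [← Polynomial.aeval_algHom_apply] at e1
  have e2 : ψ (∑ i ∈ Finset.range n, (AdjoinRoot.root ((X : (ℤ_[ℓ])[X]) ^ (ℓ ^ r) - 1)) ^ q ^ i)
      = ∑ i ∈ Finset.range n, ζ ^ q ^ i := by
    rw [map_sum]
    exact Finset.sum_congr rfl fun i _ => by rw [map_pow, hψρ]
  have e3 : ψ (∑ i ∈ Finset.range n,
        (AdjoinRoot.root ((X : (ℤ_[ℓ])[X]) ^ (ℓ ^ r) - 1)) ^ (a * q ^ i))
      = ∑ i ∈ Finset.range n, ζ ^ (a * q ^ i) := by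
    rw [map_sum]
    exact Finset.sum_congr rfl fun i _ => by rw [map_pow, hψρ]
  rw [e2, e3] at e1
  rw [e1]
  -- compare the exponents
  have hζne : ζ ≠ 0 := by
    intro h0
    rw [h0] at hζN
    simp only [zero_pow (by omega : ℓ ^ r ≠ 0)] at hζN
    exact zero_ne_one hζN
  have hζNz : ζ ^ ((ℓ ^ r : ℕ) : ℤ) = 1 := by
    rw [zpow_natCast, hζN]
  have hζj : ζ ^ j = ζ ^ (a : ℤ) := by
    have hmod : j = ((ℓ ^ r : ℕ) : ℤ) * (j / ((ℓ ^ r : ℕ) : ℤ)) + j % ((ℓ ^ r : ℕ) : ℤ) :=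
      (Int.mul_ediv_add_emod _ _).symm
    have hnonneg : 0 ≤ j % ((ℓ ^ r : ℕ) : ℤ) :=
      Int.emod_nonneg _ (by exact_mod_cast (by omega : (ℓ ^ r : ℕ) ≠ 0))
    have htn : ((a : ℕ) : ℤ) = j % ((ℓ ^ r : ℕ) : ℤ) := by
      rw [ha]
      exact Int.toNat_of_nonneg hnonneg
    conv_lhs => rw [hmod]
    rw [zpow_add₀ hζne, zpow_mul, hζNz, one_zpow, one_mul, ← htn]
  refine Finset.sum_congr rfl fun i _ => ?_
  have : j * (q : ℤ) ^ i = j * ((q ^ i : ℕ) : ℤ) := by push_cast; ring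
  rw [this, zpow_mul, hζj, ← zpow_mul]
  have : (a : ℤ) * ((q ^ i : ℕ) : ℤ) = ((a * q ^ i : ℕ) : ℤ) := by push_cast; ring
  rw [this, zpow_natCast]
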